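/- arXiv:1804.04594 — 5 statements merged into one kernel-verified Lean document; each statement's English description precedes it below -/
import Mathlib

section
/- Let G be a finite group, K a normal subgroup of G, and x ∈ G an element whose order is coprime to |K|. Then the centralizer of the image of x in G/K equals the image of C_G(x)·K under the quotient map, i.e., C_{G/K}(xK) = C_G(x)K/K. -/
open Subgroup

universe u




lemma conj_zpowers {L : Type*} [Group L] (g z : L) :
    Subgroup.map (MulAut.conj g).toMonoidHom (Subgroup.zpowers z) =
      Subgroup.zpowers (g * z * g⁻¹) := by
  rw [MonoidHom.map_zpowers]; rfl

lemma conj_of_normal {L : Type*} [Group L] {P : Subgroup L} (hP : P.Normal) (g : L) :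
    Subgroup.map (MulAut.conj g).toMonoidHom P = P := by
  ext z
  simp only [Subgroup.mem_map, MulAut.conj_apply, MonoidHom.coe_coe, MulEquiv.coe_toMonoidHom]
  constructor
  · rintro ⟨w, hw, rfl⟩; exact hP.conj_mem w hw g
  · intro hz
    refine ⟨g⁻¹ * z * g, by simpa using hP.conj_mem z hz g⁻¹, ?_⟩
    simp [MulAut.conj_apply, mul_assoc]

lemma self_mem_normalizer_zpowers_pow {L : Type*} [Group L] (c : L) (m : ℕ) :
    c ∈ Subgroup.normalizer ((Subgroup.zpowers (c ^ m) : Subgroup L) : Set L) := by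
  rw [Subgroup.mem_normalizer_iff]
  intro h
  constructor
  · rintro ⟨t, rfl⟩
    refine ⟨t, ?_⟩
    show (c ^ m) ^ t = c * (c ^ m) ^ t * c⁻¹
    rw [(((Commute.refl c).pow_right m).zpow_right t).eq]; group
  · rintro ⟨t, ht⟩
    refine ⟨t, ?_⟩
    show (c ^ m) ^ t = h
    replace ht : (c ^ m) ^ t = c * h * c⁻¹ := ht
    have hc : c * (c ^ m) ^ t = (c ^ m) ^ t * c := (((Commute.refl c).pow_right m).zpow_right t).eq
    have := congrArg (fun w => c⁻¹ * w * c) ht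
    calc (c ^ m) ^ t = c⁻¹ * (c * (c ^ m) ^ t * c⁻¹) * c := by group
    _ = c⁻¹ * ((c ^ m) ^ t * c * c⁻¹) * c := by rw [hc]
    _ = c⁻¹ * (c ^ m) ^ t * c := by group
    _ = c⁻¹ * (c * h * c⁻¹) * c := by rw [ht]
    _ = h := by group


lemma orderOf_mk_of_coprime {L : Type*} [Group L] [Finite L] (K : Subgroup L) [K.Normal] (x : L)
    (hcop : Nat.Coprime (orderOf x) (Nat.card K)) :
    orderOf ((x : L ⧸ K)) = orderOf x := by
  have hdvd : orderOf ((x : L ⧸ K)) ∣ orderOf x := orderOf_map_dvd (QuotientGroup.mk' K) x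
  set d := orderOf ((x : L ⧸ K)) with hd
  have hxd : x ^ d ∈ K := by
    rw [← QuotientGroup.eq_one_iff, QuotientGroup.mk_pow, pow_orderOf_eq_one]
  have h1 : orderOf (x ^ d) ∣ Nat.card K := by
    have h := orderOf_dvd_natCard (⟨x ^ d, hxd⟩ : K)
    rwa [Subgroup.orderOf_mk] at h
  have h2 : orderOf (x ^ d) ∣ orderOf x := orderOf_pow_dvd d
  have h3 : x ^ d = 1 := by
    rw [← orderOf_eq_one_iff]
    have := Nat.dvd_gcd h2 h1
    rwa [Nat.Coprime.gcd_eq_one hcop, Nat.dvd_one] at this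
  exact Nat.dvd_antisymm hdvd (orderOf_dvd_of_pow_eq_one h3)

lemma subgroupOf_gen {L : Type*} [Group L] (K : Subgroup L) [K.Normal] (x : L)
    (H : Subgroup L) (hx : x ∈ H) (hle : H ≤ Subgroup.zpowers x ⊔ K) :
    Subgroup.zpowers (⟨x, hx⟩ : H) ⊔ K.subgroupOf H = ⊤ := by
  rw [eq_top_iff]
  rintro ⟨h, hh⟩ -
  have h1 : h ∈ (↑(Subgroup.zpowers x ⊔ K) : Set L) := hle hh
  rw [Subgroup.mul_normal] at h1
  obtain ⟨c, hc, k, hk, hck⟩ := h1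
  obtain ⟨i, hi⟩ := hc
  replace hi : x ^ i = c := hi
  replace hck : c * k = h := hck
  have hkH : k ∈ H := by
    have : k = x ^ (-i) * h := by
      have : (x ^ i) * k = h := by rw [hi]; exact hck
      rw [← this]; group
    rw [this]; exact mul_mem (zpow_mem hx _) hh
  have heq : (⟨h, hh⟩ : H) = (⟨x, hx⟩ : H) ^ i * ⟨k, hkH⟩ := by
    ext
    push_cast
    rw [hi]; exact hck.symm
  rw [heq]
  exact mul_mem (Subgroup.mem_sup_left (zpow_mem (Subgroup.mem_zpowers _) _))
    (Subgroup.mem_sup_right (Subgroup.mem_subgroupOf.mpr hk))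

lemma key : ∀ (N : ℕ) (L : Type u) [Group L] [Finite L], Nat.card L ≤ N →
    ∀ (K : Subgroup L), K.Normal →
    ∀ (x y : L), Nat.Coprime (orderOf x) (Nat.card K) →
      orderOf y ∣ orderOf x → y⁻¹ * x ∈ K →
      Subgroup.zpowers x ⊔ K = ⊤ →
      ∃ k ∈ K, k * y * k⁻¹ = x := by
  intro N
  induction N with
  | zero =>
    intro L _ _ hcard
    exact absurd hcard (by have := Nat.card_pos (α := L); omega)
  | succ N IH =>
    intro L _ _ hcard K hKnorm x y hcop hdvd hyx hgen
    haveI := hKnorm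
    set n := orderOf x with hn
    have hnpos : 0 < n := orderOf_pos x
    by_cases h1 : n = 1
    · refine ⟨1, K.one_mem, ?_⟩
      have hx1 : x = 1 := orderOf_eq_one_iff.mp h1
      have hy1 : y = 1 := orderOf_eq_one_iff.mp (Nat.dvd_one.mp (h1 ▸ hdvd))
      simp [hx1, hy1]
    -- basic quotient facts
    have hmkxy : ((y : L ⧸ K)) = ((x : L ⧸ K)) := QuotientGroup.eq.mpr hyx
    have hordmk : orderOf ((x : L ⧸ K)) = n := orderOf_mk_of_coprime K x hcop
    have hordy : orderOf y = n := by
      refine Nat.dvd_antisymm hdvd ?_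
      have h2 : orderOf ((y : L ⧸ K)) ∣ orderOf y := orderOf_map_dvd (QuotientGroup.mk' K) y
      rwa [hmkxy, hordmk] at h2
    -- the prime p and the Sylow order q
    set p := n.minFac with hp'
    have hp : p.Prime := Nat.minFac_prime h1
    haveI : Fact p.Prime := ⟨hp⟩
    set a := n.factorization p with ha
    set q := p ^ a with hq'
    have hqdvd : q ∣ n := Nat.ordProj_dvd n p
    set m := n / q with hm'
    have hmq : m * q = n := Nat.div_mul_cancel hqdvd
    have hapos : 0 < a := by
      rw [ha]
      exact (Nat.Prime.factorization_pos_of_dvd hp (by omega) (Nat.minFac_dvd n))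
    have hq1 : 1 < q := by
      calc 1 < p := hp.one_lt
      _ ≤ p ^ a := Nat.le_self_pow (by omega) p
    have hmdvd : m ∣ n := ⟨q, hmq.symm⟩
    have hmpos : 0 < m := Nat.div_pos (Nat.le_of_dvd hnpos hqdvd) (by omega)
    have hnm : n / m = q := by
      rw [← hmq]; exact Nat.mul_div_cancel_left q hmpos
    -- orders of x^m and y^m
    have hordxm : orderOf (x ^ m) = q := by
      rw [orderOf_pow, ← hn, Nat.gcd_eq_right hmdvd]
      exact hnm
    have hordym : orderOf (y ^ m) = q := by
      rw [orderOf_pow, hordy, Nat.gcd_eq_right hmdvd]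
      exact hnm
    -- card L
    have hcardK : Nat.card (L ⧸ K) = n := by
      have h2 : Subgroup.map (QuotientGroup.mk' K) (Subgroup.zpowers x ⊔ K) = ⊤ := by
        rw [hgen]
        exact Subgroup.map_top_of_surjective _ (QuotientGroup.mk'_surjective K)
      rw [Subgroup.map_sup, MonoidHom.map_zpowers] at h2
      have h3 : Subgroup.map (QuotientGroup.mk' K) K = ⊥ := by
        rw [eq_bot_iff]
        rintro z ⟨w, hw, rfl⟩
        simpa [QuotientGroup.eq_one_iff] using hw
      rw [h3, sup_bot_eq] at h2
      rw [← Subgroup.card_top (G := L ⧸ K), ← h2, Nat.card_zpowers]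
      exact hordmk
    have hcardL : Nat.card L = Nat.card K * n := by
      rw [← hcardK, Subgroup.card_eq_card_quotient_mul_card_subgroup K, mul_comm]
    have hfacL : (Nat.card L).factorization p = a := by
      have hKpos : 0 < Nat.card K := Nat.card_pos
      rw [hcardL, Nat.factorization_mul (by omega) (by omega)]
      have hpK : ¬ p ∣ Nat.card K := by
        intro hdd
        have := Nat.dvd_gcd (Nat.minFac_dvd n) hdd
        rw [Nat.Coprime.gcd_eq_one hcop, Nat.dvd_one] at this
        exact hp.one_lt.ne' this
      rw [Finsupp.add_apply, Nat.factorization_eq_zero_of_not_dvd hpK]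
      simp [ha]
    -- Sylow subgroups generated by x^m, y^m
    have hcxm : Nat.card (Subgroup.zpowers (x ^ m)) = p ^ (Nat.card L).factorization p := by
      rw [Nat.card_zpowers, hordxm, hfacL]
    have hcym : Nat.card (Subgroup.zpowers (y ^ m)) = p ^ (Nat.card L).factorization p := by
      rw [Nat.card_zpowers, hordym, hfacL]
    obtain ⟨g, hg⟩ := MulAction.exists_smul_eq L (Sylow.ofCard _ hcym) (Sylow.ofCard _ hcxm)
    have hgsub : Subgroup.map (MulAut.conj g).toMonoidHom (Subgroup.zpowers (y ^ m)) =
        Subgroup.zpowers (x ^ m) := by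
      have := congrArg (fun (S : Sylow p L) => (S : Subgroup L)) hg
      simpa [Sylow.coe_subgroup_smul, Subgroup.pointwise_smul_def] using this
    -- decompose g = x^i * k with k ∈ K
    have hgmem : g ∈ (↑(Subgroup.zpowers x ⊔ K) : Set L) := by rw [hgen]; trivial
    rw [Subgroup.mul_normal] at hgmem
    obtain ⟨c, hc, k, hkK, hck⟩ := hgmem
    obtain ⟨i, hi⟩ := hc
    replace hi : x ^ i = c := hi
    replace hck : c * k = g := hck
    set y₁ := k * y * k⁻¹ with hy₁
    have hy₁m : (y₁ : L) ^ m = k * y ^ m * k⁻¹ := by rw [hy₁, conj_pow]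
    -- zpowers (y₁ ^ m) = zpowers (x ^ m)
    have hPy : Subgroup.zpowers (y₁ ^ m) = Subgroup.zpowers (x ^ m) := by
      have h2 := congrArg (Subgroup.map (MulAut.conj ((x ^ i)⁻¹ : L)).toMonoidHom) hgsub
      rw [conj_zpowers, conj_zpowers, conj_zpowers] at h2
      have e1 : (x ^ i)⁻¹ * (g * y ^ m * g⁻¹) * ((x ^ i)⁻¹)⁻¹ = y₁ ^ m := by
        rw [hy₁m, ← hck, ← hi]; group
      have e2 : (x ^ i)⁻¹ * x ^ m * ((x ^ i)⁻¹)⁻¹ = x ^ m := by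
        have hcomm : Commute ((x ^ i)⁻¹) (x ^ m) :=
          (((Commute.refl x).zpow_left i).inv_left.pow_right m)
        rw [hcomm.eq]; group
      rwa [e1, e2] at h2
    set P := Subgroup.zpowers (x ^ m) with hP
    have hordy₁ : orderOf y₁ = n := by
      rw [hy₁]
      have := orderOf_injective (MulAut.conj k).toMonoidHom (MulEquiv.injective _) y
      simpa [MulAut.conj_apply] using this.trans hordy
    have hy₁x : y₁⁻¹ * x ∈ K := by
      rw [← QuotientGroup.eq]
      have hk1 : ((k : L) : L ⧸ K) = 1 := (QuotientGroup.eq_one_iff k).mpr hkK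
      calc ((y₁ : L) : L ⧸ K) = ((k : L) : L ⧸ K) * y * (((k : L) : L ⧸ K))⁻¹ := by
            rw [hy₁]; rfl
      _ = ((y : L) : L ⧸ K) := by rw [hk1]; group
      _ = ((x : L) : L ⧸ K) := hmkxy
    set H := Subgroup.normalizer (P : Set L) with hH
    have hxH : x ∈ H := self_mem_normalizer_zpowers_pow x m
    have hy₁H : y₁ ∈ H := by
      have := self_mem_normalizer_zpowers_pow y₁ m
      rwa [hPy] at this
    by_cases hKH : K ≤ H
    -- Case 2 : P is normal, pass to the quotient L ⧸ P
    · have hHtop : H = ⊤ := by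
        rw [eq_top_iff, ← hgen]
        exact sup_le (Subgroup.zpowers_le.mpr hxH) hKH
      haveI hPnorm : P.Normal := Subgroup.normalizer_eq_top_iff.mp hHtop
      set π₂ := QuotientGroup.mk' P with hπ₂
      haveI hKmapnorm : (K.map π₂).Normal :=
        Subgroup.Normal.map hKnorm π₂ (QuotientGroup.mk'_surjective P)
      have hcardP : Nat.card P = q := by rw [hP, Nat.card_zpowers, hordxm]
      have hcardQ : Nat.card (L ⧸ P) ≤ N := by
        have h2 := Subgroup.card_eq_card_quotient_mul_card_subgroup P
        rw [hcardP] at h2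
        have h3 : 0 < Nat.card (L ⧸ P) := Nat.card_pos
        have h4 : Nat.card (L ⧸ P) * 2 ≤ Nat.card (L ⧸ P) * q := Nat.mul_le_mul_left _ (by omega)
        omega
      have hcop2 : Nat.Coprime (orderOf (π₂ x)) (Nat.card (K.map π₂)) := by
        refine Nat.Coprime.coprime_dvd_left (orderOf_map_dvd π₂ x) ?_
        refine Nat.Coprime.coprime_dvd_right ?_ hcop
        exact Subgroup.card_dvd_of_surjective (π₂.subgroupMap K)
          (MonoidHom.subgroupMap_surjective π₂ K)
      have hym_memP : y₁ ^ m ∈ P := by rw [← hPy]; exact Subgroup.mem_zpowers _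
      have hdvd2 : orderOf (π₂ y₁) ∣ orderOf (π₂ x) := by
        have hA : orderOf (π₂ y₁) ∣ m := by
          apply orderOf_dvd_of_pow_eq_one
          rw [← map_pow]
          exact (QuotientGroup.eq_one_iff _).mpr hym_memP
        have hB : m ∣ orderOf (π₂ x) := by
          set d := orderOf (π₂ x) with hdd
          have hxd : x ^ d ∈ P := by
            have h20 : π₂ (x ^ d) = 1 := by rw [map_pow, pow_orderOf_eq_one]
            exact (QuotientGroup.eq_one_iff _).mp h20
          obtain ⟨t, ht⟩ := hxd
          replace ht : (x ^ (m : ℕ)) ^ t = x ^ (d : ℕ) := ht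
          have hzp : (x : L) ^ ((m : ℤ) * t - (d : ℤ)) = 1 := by
            rw [zpow_sub, zpow_mul, zpow_natCast, zpow_natCast, ht]
            group
          have hzd : ((n : ℕ) : ℤ) ∣ ((m : ℤ) * t - (d : ℤ)) :=
            orderOf_dvd_iff_zpow_eq_one.mpr hzp
          have hmn : ((m : ℕ) : ℤ) ∣ ((n : ℕ) : ℤ) := Int.natCast_dvd_natCast.mpr hmdvd
          have : ((m : ℕ) : ℤ) ∣ (d : ℤ) := by
            have h5 : ((m : ℕ) : ℤ) ∣ ((m : ℤ) * t - (d : ℤ)) := dvd_trans hmn hzd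
            have h6 : ((m : ℕ) : ℤ) ∣ (m : ℤ) * t := Dvd.intro t rfl
            have h7 := dvd_sub h6 h5
            simpa using h7
          exact_mod_cast this
        exact hA.trans hB
      have hyx2 : (π₂ y₁)⁻¹ * π₂ x ∈ K.map π₂ := by
        rw [← map_inv, ← map_mul]
        exact Subgroup.mem_map_of_mem π₂ hy₁x
      have hgen2 : Subgroup.zpowers (π₂ x) ⊔ K.map π₂ = ⊤ := by
        rw [← MonoidHom.map_zpowers, ← Subgroup.map_sup, hgen]
        exact Subgroup.map_top_of_surjective _ (QuotientGroup.mk'_surjective P)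
      obtain ⟨κ, hκmem, hκ⟩ := IH (L ⧸ P) hcardQ (K.map π₂) hKmapnorm (π₂ x) (π₂ y₁)
        hcop2 hdvd2 hyx2 hgen2
      obtain ⟨k₂, hk₂K, hk₂⟩ := Subgroup.mem_map.mp hκmem
      set y₂ := k₂ * y₁ * k₂⁻¹ with hy₂
      have hy₂xP : y₂⁻¹ * x ∈ P := by
        have h5 : π₂ y₂ = π₂ x := by
          rw [hy₂, map_mul, map_mul, map_inv, hk₂, hκ]
        have h6 : (((y₂ : L)) : L ⧸ P) = ((x : L) : L ⧸ P) := h5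
        exact QuotientGroup.eq.mp h6
      have hPy₂ : Subgroup.zpowers (y₂ ^ m) = P := by
        have h7 : (y₂ : L) ^ m = k₂ * y₁ ^ m * k₂⁻¹ := by rw [hy₂, conj_pow]
        rw [h7, ← conj_zpowers, hPy, conj_of_normal hPnorm]
      obtain ⟨t, ht⟩ : y₂⁻¹ * x ∈ Subgroup.zpowers (y₂ ^ m) := by rw [hPy₂]; exact hy₂xP
      replace ht : ((y₂ : L) ^ (m : ℕ)) ^ t = y₂⁻¹ * x := ht
      have hxy₂ : x = y₂ ^ (1 + (m : ℤ) * t) := by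
        rw [zpow_add, zpow_one, zpow_mul, zpow_natCast, ht]
        group
      have hy₂K : ((y₂ : L) : L ⧸ K) = ((x : L) : L ⧸ K) := by
        have hk₂1 : ((k₂ : L) : L ⧸ K) = 1 := (QuotientGroup.eq_one_iff k₂).mpr hk₂K
        have hy₁K : ((y₁ : L) : L ⧸ K) = ((x : L) : L ⧸ K) := QuotientGroup.eq.mpr hy₁x
        calc ((y₂ : L) : L ⧸ K) = ((k₂ : L) : L ⧸ K) * y₁ * (((k₂ : L) : L ⧸ K))⁻¹ := by
              rw [hy₂]; rfl
        _ = ((y₁ : L) : L ⧸ K) := by rw [hk₂1]; group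
        _ = ((x : L) : L ⧸ K) := hy₁K
      have hmt : ((n : ℕ) : ℤ) ∣ (m : ℤ) * t := by
        have h8 : ((x : L) : L ⧸ K) ^ ((m : ℤ) * t) = 1 := by
          have h9 := congrArg (fun (w : L) => ((w : L ⧸ K))) hxy₂
          simp only [QuotientGroup.mk_zpow, hy₂K] at h9
          have h10 : ((x : L) : L ⧸ K) ^ ((m : ℤ) * t) =
              (((x : L) : L ⧸ K))⁻¹ * ((x : L) : L ⧸ K) ^ ((1 : ℤ) + (m : ℤ) * t) := by
            rw [zpow_add, zpow_one]; group
          rw [h10, ← h9, inv_mul_cancel]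
        rw [← hordmk]
        exact orderOf_dvd_iff_zpow_eq_one.mpr h8
      have hordy₂ : orderOf y₂ = n := by
        rw [hy₂]
        have := orderOf_injective (MulAut.conj k₂).toMonoidHom (MulEquiv.injective _) y₁
        simpa [MulAut.conj_apply] using this.trans hordy₁
      have hy₂mt : (y₂ : L) ^ ((m : ℤ) * t) = 1 := by
        rw [← orderOf_dvd_iff_zpow_eq_one, hordy₂]
        exact hmt
      have hfin : x = y₂ := by rw [hxy₂, zpow_add, zpow_one, hy₂mt, mul_one]
      refine ⟨k₂ * k, K.mul_mem hk₂K hkK, ?_⟩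
      rw [hfin, hy₂, hy₁]
      group
    -- Case 1 : recurse into the proper subgroup H = normalizer of P
    · obtain ⟨k₀, hk₀K, hk₀H⟩ := SetLike.not_le_iff_exists.mp hKH
      have hHne : H ≠ ⊤ := by
        intro h2
        exact hk₀H (h2 ▸ Subgroup.mem_top k₀)
      have hcardH : Nat.card H ≤ N := by
        have h2 := Subgroup.card_mul_index H
        have h3 : H.index ≠ 1 := fun h => hHne (Subgroup.index_eq_one.mp h)
        have h4 : H.index ≠ 0 := Subgroup.index_ne_zero_of_finite
        have h5 : 0 < Nat.card H := Nat.card_pos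
        have h6 : 2 ≤ H.index := by omega
        have h7 : Nat.card H * 2 ≤ Nat.card H * H.index := Nat.mul_le_mul_left _ h6
        omega
      set x' : H := ⟨x, hxH⟩ with hx'
      set y' : H := ⟨y₁, hy₁H⟩ with hy'
      have hordx' : orderOf x' = n := (Subgroup.orderOf_mk x hxH).trans hn.symm
      have hordy' : orderOf y' = n := (Subgroup.orderOf_mk y₁ hy₁H).trans hordy₁
      have hcardK' : Nat.card (K.subgroupOf H) ∣ Nat.card K := by
        refine Subgroup.card_dvd_of_injective
          (MonoidHom.mk' (fun a => ⟨a.1.1, a.2⟩) (fun _ _ => rfl) : (K.subgroupOf H) →* K) ?_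
        intro a b hab
        have hab' : (⟨a.1.1, a.2⟩ : K) = ⟨b.1.1, b.2⟩ := hab
        have h30 : (a.1.1 : L) = b.1.1 := congrArg (fun z : K => (z : L)) hab'
        exact Subtype.ext (Subtype.ext h30)
      have hcop' : Nat.Coprime (orderOf x') (Nat.card (K.subgroupOf H)) := by
        rw [hordx']
        exact Nat.Coprime.coprime_dvd_right hcardK' hcop
      have hdvd' : orderOf y' ∣ orderOf x' := by rw [hordx', hordy']
      have hyx' : y'⁻¹ * x' ∈ K.subgroupOf H := by
        rw [Subgroup.mem_subgroupOf]
        exact hy₁x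
      have hgen' : Subgroup.zpowers x' ⊔ K.subgroupOf H = ⊤ :=
        subgroupOf_gen K x H hxH (by rw [hgen]; exact le_top)
      obtain ⟨k', hk'mem, hk'⟩ := IH H hcardH (K.subgroupOf H) (Subgroup.normal_subgroupOf)
        x' y' hcop' hdvd' hyx' hgen'
      have hk'K : (k' : L) ∈ K := Subgroup.mem_subgroupOf.mp hk'mem
      have hconjL : (k' : L) * y₁ * (k' : L)⁻¹ = x := by
        have := congrArg (H.subtype) hk'
        simpa using this
      refine ⟨(k' : L) * k, K.mul_mem hk'K hkK, ?_⟩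
      rw [← hconjL, hy₁]
      group

theorem stmt_3 {G : Type*} [Group G] [Finite G] (K : Subgroup G) [K.Normal] (x : G)
    (hcop : Nat.Coprime (orderOf x) (Nat.card K)) :
    Subgroup.centralizer {(QuotientGroup.mk x : G ⧸ K)} =
      Subgroup.map (QuotientGroup.mk' K) (Subgroup.centralizer {x} ⊔ K) := by
  apply le_antisymm
  · intro qq hqq
    obtain ⟨g, rfl⟩ := QuotientGroup.mk'_surjective K qq
    have hcomm : (QuotientGroup.mk x : G ⧸ K) * (QuotientGroup.mk' K g) =
        (QuotientGroup.mk' K g) * (QuotientGroup.mk x : G ⧸ K) :=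
      Subgroup.mem_centralizer_iff.mp hqq _ (Set.mem_singleton _)
    set y := g * x * g⁻¹ with hy
    have hyx : y⁻¹ * x ∈ K := by
      rw [← QuotientGroup.eq]
      show ((g * x * g⁻¹ : G) : G ⧸ K) = ((x : G) : G ⧸ K)
      have : ((g * x * g⁻¹ : G) : G ⧸ K) = ((g : G) : G ⧸ K) * x * (((g : G)) : G ⧸ K)⁻¹ := rfl
      rw [this]
      have hc : ((x : G) : G ⧸ K) * ((g : G) : G ⧸ K) = ((g : G) : G ⧸ K) * x := hcomm
      rw [← hc]
      group
    -- restrict to L₀ = ⟨x⟩ K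
    set L₀ : Subgroup G := Subgroup.zpowers x ⊔ K with hL₀
    have hxL : x ∈ L₀ := Subgroup.mem_sup_left (Subgroup.mem_zpowers x)
    have hyL : y ∈ L₀ := by
      have h2 : x⁻¹ * y ∈ K := by
        have := K.inv_mem hyx
        simpa using this
      have : y = x * (x⁻¹ * y) := by group
      rw [this]
      exact mul_mem hxL (Subgroup.mem_sup_right h2)
    set x₀ : L₀ := ⟨x, hxL⟩ with hx₀
    set y₀ : L₀ := ⟨y, hyL⟩ with hy₀
    have hordx₀ : orderOf x₀ = orderOf x := Subgroup.orderOf_mk x hxL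
    have hordy₀ : orderOf y₀ = orderOf x := by
      rw [Subgroup.orderOf_mk, hy]
      have := orderOf_injective (MulAut.conj g).toMonoidHom (MulEquiv.injective _) x
      simpa [MulAut.conj_apply] using this
    have hcardK₀ : Nat.card (K.subgroupOf L₀) ∣ Nat.card K := by
      refine Subgroup.card_dvd_of_injective
        (MonoidHom.mk' (fun a => ⟨a.1.1, a.2⟩) (fun _ _ => rfl) : (K.subgroupOf L₀) →* K) ?_
      intro a b hab
      have hab' : (⟨a.1.1, a.2⟩ : K) = ⟨b.1.1, b.2⟩ := hab
      have h30 : (a.1.1 : G) = b.1.1 := congrArg (fun z : K => (z : G)) hab'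
      exact Subtype.ext (Subtype.ext h30)
    obtain ⟨k₀, hk₀mem, hk₀⟩ := key (Nat.card L₀) L₀ le_rfl (K.subgroupOf L₀)
      Subgroup.normal_subgroupOf x₀ y₀
      (by rw [hordx₀]; exact Nat.Coprime.coprime_dvd_right hcardK₀ hcop)
      (by rw [hordx₀, hordy₀])
      (by rw [Subgroup.mem_subgroupOf]; exact hyx)
      (subgroupOf_gen K x L₀ hxL le_rfl)
    have hkK : (k₀ : G) ∈ K := Subgroup.mem_subgroupOf.mp hk₀mem
    have hconj : (k₀ : G) * y * (k₀ : G)⁻¹ = x := by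
      have := congrArg (L₀.subtype) hk₀
      simpa using this
    have hcent : (k₀ : G) * g ∈ Subgroup.centralizer {x} := by
      rw [Subgroup.mem_centralizer_iff]
      rintro w rfl
      have : ((k₀ : G) * g) * w * ((k₀ : G) * g)⁻¹ = w := by
        calc ((k₀ : G) * g) * w * ((k₀ : G) * g)⁻¹ = (k₀ : G) * (g * w * g⁻¹) * (k₀ : G)⁻¹ := by
              group
        _ = w := by rw [← hy]; exact hconj
      calc w * ((k₀ : G) * g) = (((k₀ : G) * g) * w * ((k₀ : G) * g)⁻¹) * ((k₀ : G) * g) := by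
            rw [this]
      _ = ((k₀ : G) * g) * w := by group
    refine ⟨(k₀ : G) * g, Subgroup.mem_sup_left hcent, ?_⟩
    show (((k₀ : G) * g : G) : G ⧸ K) = _
    have hk1 : (((k₀ : G) : G) : G ⧸ K) = 1 := (QuotientGroup.eq_one_iff _).mpr hkK
    calc (((k₀ : G) * g : G) : G ⧸ K) = (((k₀ : G) : G) : G ⧸ K) * ((g : G) : G ⧸ K) := rfl
    _ = ((g : G) : G ⧸ K) := by rw [hk1, one_mul]
  · rintro qq hqq
    obtain ⟨w, hw, rfl⟩ := Subgroup.mem_map.mp hqq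
    have hw' : w ∈ (↑(Subgroup.centralizer {x} ⊔ K) : Set G) := hw
    rw [Subgroup.mul_normal] at hw'
    obtain ⟨c, hc, k, hk, hck⟩ := hw'
    replace hck : c * k = w := hck
    rw [Subgroup.mem_centralizer_iff]
    rintro z rfl
    have hxc : x * c = c * x := Subgroup.mem_centralizer_iff.mp hc x (Set.mem_singleton _)
    have hk1 : ((k : G) : G ⧸ K) = 1 := (QuotientGroup.eq_one_iff _).mpr hk
    have hmkw : (QuotientGroup.mk' K) w = ((c : G) : G ⧸ K) := by
      rw [← hck]
      show ((c * k : G) : G ⧸ K) = _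
      rw [QuotientGroup.mk_mul, hk1, mul_one]
    rw [hmkw]
    show ((x : G) : G ⧸ K) * c = ((c : G) : G ⧸ K) * x
    rw [← QuotientGroup.mk_mul, ← QuotientGroup.mk_mul, hxc]
end

section
/- Let G be a finite group and g ∈ G. If every conjugacy class of G contains an element h such that g commutes with h (equivalently, g ∈ C_G(h)), then g is in the center of G. -/
theorem stmt_5 {G : Type*} [Group G] [Finite G] (g : G)
    (h : ∀ x : G, ∃ h : G, IsConj x h ∧ g * h = h * g) :
    g ∈ Subgroup.center G := by
  classical
  cases nonempty_fintype G
  set H : Subgroup G := Subgroup.centralizer {g} with hH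
  -- every x lies in some conjugate of H, indexed by G ⧸ H
  have cover : ∀ x : G, ∃ q : G ⧸ H, ∃ y ∈ H,
      (Quotient.out q) * y * (Quotient.out q)⁻¹ = x := by
    intro x
    obtain ⟨k, hk, hcomm⟩ := h x
    obtain ⟨c, hc⟩ := isConj_iff.mp hk
    have hkH : k ∈ H := by
      rw [hH, Subgroup.mem_centralizer_iff]
      intro a ha
      simp only [Set.mem_singleton_iff] at ha
      subst ha
      exact hcomm
    refine ⟨QuotientGroup.mk c⁻¹, ?_⟩
    set d := Quotient.out (QuotientGroup.mk c⁻¹ : G ⧸ H) with hd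
    have hdc : (c⁻¹)⁻¹ * d ∈ H := QuotientGroup.eq.mp (QuotientGroup.out_eq' _).symm
    have hx : c⁻¹ * k * c = x := by rw [← hc]; group
    refine ⟨d⁻¹ * c⁻¹ * k * c * d, ?_, by rw [← hx]; group⟩
    have h1 : c * d ∈ H := by simpa [mul_assoc] using hdc
    have : (c * d)⁻¹ * k * (c * d) ∈ H := H.mul_mem (H.mul_mem (H.inv_mem h1) hkH) h1
    simpa [mul_assoc] using this
  -- cardinality argument
  suffices htop : H = ⊤ by
    rw [Subgroup.mem_center_iff]
    intro x
    have : x ∈ H := htop ▸ Subgroup.mem_top x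
    exact (Subgroup.mem_centralizer_iff.mp this g rfl).symm
  by_contra hne
  have hidx : 2 ≤ H.index := by
    have h0 : H.index ≠ 0 := Subgroup.index_ne_zero_of_finite
    have h1 : H.index ≠ 1 := fun hi => hne (Subgroup.index_eq_one.mp hi)
    omega
  -- Finset union bound
  set T : G ⧸ H → Finset G := fun q =>
    ((H : Set G).toFinset.image
      (fun y => (Quotient.out q) * y * (Quotient.out q)⁻¹)).erase 1
  have hTcard : ∀ q, (T q).card = Nat.card H - 1 := by
    intro q
    have hinj : Set.InjOn (fun y => (Quotient.out q) * y * (Quotient.out q)⁻¹)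
        ((H : Set G).toFinset : Set G) := by
      intro a _ b _ hab
      simpa using hab
    have h1mem : (1 : G) ∈ (H : Set G).toFinset.image
        (fun y => (Quotient.out q) * y * (Quotient.out q)⁻¹) := by
      simp only [Finset.mem_image]
      exact ⟨1, by simp [H.one_mem]⟩
    rw [Finset.card_erase_of_mem h1mem, Finset.card_image_of_injOn hinj]
    congr 1
    simp [Set.toFinset_card, Nat.card_eq_fintype_card]
  have hsub : Finset.univ.erase (1 : G) ⊆ Finset.univ.biUnion T := by
    intro x hx
    simp only [Finset.mem_erase, Finset.mem_univ, and_true] at hx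
    obtain ⟨q, y, hy, hxy⟩ := cover x
    refine Finset.mem_biUnion.mpr ⟨q, Finset.mem_univ q, ?_⟩
    simp only [T, Finset.mem_erase, Finset.mem_image]
    exact ⟨hx, y, Set.mem_toFinset.mpr hy, hxy⟩
  have hcard : Fintype.card G - 1 ≤ H.index * (Nat.card H - 1) := by
    calc Fintype.card G - 1 = (Finset.univ.erase (1 : G)).card := by
          rw [Finset.card_erase_of_mem (Finset.mem_univ 1), Finset.card_univ]
      _ ≤ (Finset.univ.biUnion T).card := Finset.card_le_card hsub
      _ ≤ ∑ q : G ⧸ H, (T q).card := Finset.card_biUnion_le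
      _ = H.index * (Nat.card H - 1) := by
          simp only [hTcard, Finset.sum_const, Finset.card_univ, smul_eq_mul]
          congr 1
          rw [Subgroup.index, Nat.card_eq_fintype_card]
  have hlag : H.index * Nat.card H = Fintype.card G := by
    rw [← Nat.card_eq_fintype_card]
    exact H.index_mul_card
  have hHpos : 1 ≤ Nat.card H := Nat.one_le_iff_ne_zero.mpr Nat.card_pos.ne'
  have hGpos : 1 ≤ Fintype.card G := Fintype.card_pos
  nlinarith [Nat.sub_add_cancel hHpos, Nat.sub_add_cancel hGpos,
    Nat.sub_add_cancel (le_trans hHpos (by nlinarith [Nat.sub_add_cancel hHpos] : Nat.card H ≤ H.index * (Nat.card H)))]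
end

section
/- A finite group is generated by any set of representatives of its conjugacy classes: if S ⊆ G intersects every conjugacy class of G, then the subgroup generated by S is all of G. -/
open MulAction

theorem stmt_6 {G : Type*} [Group G] [Finite G] (S : Set G)
    (h : ∀ x : G, ∃ s ∈ S, IsConj x s) :
    Subgroup.closure S = ⊤ := by
  classical
  cases nonempty_fintype G
  set H := Subgroup.closure S with hH
  by_contra hne
  -- every g fixes a point of G ⧸ H
  have hfix : ∀ g : G, ∃ x : G ⧸ H, g • x = x := by
    intro g
    obtain ⟨s, hs, hcj⟩ := h g
    obtain ⟨c, hc⟩ := isConj_iff.mp hcj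
    refine ⟨((c⁻¹ : G) : G ⧸ H), ?_⟩
    have hmem : (c⁻¹)⁻¹ * g * c⁻¹ ∈ H := by
      rw [inv_inv, hc]
      exact Subgroup.subset_closure hs
    have : ((g * c⁻¹ : G) : G ⧸ H) = ((c⁻¹ : G) : G ⧸ H) := by
      rw [QuotientGroup.eq]
      simpa [mul_assoc] using (H.inv_mem hmem)
    simpa [QuotientGroup.mk_mul] using this
  have hsub : Subsingleton (orbitRel.Quotient G (G ⧸ H)) :=
    (MulAction.pretransitive_iff_subsingleton_quotient G (G ⧸ H)).mp inferInstance
  have hΩ : Fintype.card (orbitRel.Quotient G (G ⧸ H)) = 1 := by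
    have : Nonempty (orbitRel.Quotient G (G ⧸ H)) := ⟨Quotient.mk'' ((1 : G) : G ⧸ H)⟩
    exact Fintype.card_eq_one_iff.mpr ⟨Classical.arbitrary _, fun b => Subsingleton.elim _ _⟩
  have hburn := MulAction.sum_card_fixedBy_eq_card_orbits_mul_card_group G (G ⧸ H)
  rw [hΩ, one_mul] at hburn
  -- card of G ⧸ H ≥ 2
  have h2 : 2 ≤ Fintype.card (G ⧸ H) := by
    have := Subgroup.one_lt_index_of_ne_top (H := H) hne
    rwa [Subgroup.index, Nat.card_eq_fintype_card] at this
  have hone : Fintype.card (fixedBy (G ⧸ H) (1 : G)) = Fintype.card (G ⧸ H) := by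
    apply Fintype.card_congr
    apply Equiv.subtypeUnivEquiv
    intro x; simp [fixedBy]
  have hge : ∀ g : G, 1 ≤ Fintype.card (fixedBy (G ⧸ H) g) := by
    intro g
    obtain ⟨x, hx⟩ := hfix g
    exact Fintype.card_pos_iff.mpr ⟨⟨x, hx⟩⟩
  have hE := Finset.sum_le_sum (s := Finset.univ.erase (1:G))
    (f := fun _ => 1) (g := fun g => Fintype.card (fixedBy (G ⧸ H) g)) (fun g _ => hge g)
  simp only [Finset.sum_const, smul_eq_mul, mul_one] at hE
  rw [← Finset.sum_erase_add _ _ (Finset.mem_univ (1:G))] at hburn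
  have hcard : (Finset.univ.erase (1:G)).card = Fintype.card G - 1 := by
    simp [Finset.card_erase_of_mem]
  have hpos : 0 < Fintype.card G := Fintype.card_pos
  rw [hone] at hburn
  omega
end

section
/- Let G be a finite Frobenius group with kernel A and complement B. If |B| is even, then A is abelian. -/
theorem stmt_8 {G : Type*} [Group G] [Finite G] (A B : Subgroup G) [A.Normal]
    (hcompl : Subgroup.IsComplement' A B) (hA : A ≠ ⊥) (hB : B ≠ ⊥)
    (hfree : ∀ b ∈ B, b ≠ 1 → ∀ a ∈ A, b * a * b⁻¹ = a → a = 1)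
    (heven : Even (Nat.card B)) :
    ∀ a ∈ A, ∀ b ∈ A, a * b = b * a := by
  classical
  haveI : Fintype B := Fintype.ofFinite _
  obtain ⟨t, ht⟩ := exists_prime_orderOf_dvd_card (G := B) 2 (by
    have h : Even (Fintype.card B) := by rwa [← Nat.card_eq_fintype_card]
    exact h.two_dvd)
  set τ : G := (t : G) with hτ
  have htB : τ ∈ B := t.2
  have ht1 : τ ≠ 1 := by
    intro h
    have : t = 1 := Subtype.ext h
    rw [this, orderOf_one] at ht
    norm_num at ht
  have ht2 : τ * τ = 1 := by
    have h1 := pow_orderOf_eq_one t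
    rw [ht] at h1
    have h2 : (t : B) * t = 1 := by rw [← pow_two]; exact h1
    calc τ * τ = ((t * t : B) : G) := rfl
    _ = 1 := by rw [h2]; rfl
  -- the map f : A → A
  have hmem : ∀ a : A, (a : G)⁻¹ * (τ * a * τ⁻¹) ∈ A := fun a =>
    A.mul_mem (A.inv_mem a.2) (‹A.Normal›.conj_mem _ a.2 τ)
  let f : A → A := fun a => ⟨(a : G)⁻¹ * (τ * a * τ⁻¹), hmem a⟩
  have hinj : Function.Injective f := by
    intro a c h
    have h' : (a : G)⁻¹ * (τ * a * τ⁻¹) = (c : G)⁻¹ * (τ * c * τ⁻¹) :=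
      congrArg Subtype.val h
    have hX : τ * (a : G) * τ⁻¹ = (a : G) * ((c : G)⁻¹ * (τ * (c : G) * τ⁻¹)) := by
      rw [← h']; group
    have h2 : τ * (a : G)⁻¹ * τ⁻¹ = (τ * (c : G)⁻¹ * τ⁻¹) * ((c : G) * (a : G)⁻¹) := by
      have h3 := congrArg Inv.inv hX
      rw [show (τ * (a : G) * τ⁻¹)⁻¹ = τ * (a : G)⁻¹ * τ⁻¹ by group] at h3
      rw [h3]; group
    have hca : τ * ((c : G) * (a : G)⁻¹) * τ⁻¹ = (c : G) * (a : G)⁻¹ := by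
      calc τ * ((c : G) * (a : G)⁻¹) * τ⁻¹
          = (τ * (c : G) * τ⁻¹) * (τ * (a : G)⁻¹ * τ⁻¹) := by group
      _ = (c : G) * (a : G)⁻¹ := by rw [h2]; group
    have h4 := hfree τ htB ht1 _ (A.mul_mem c.2 (A.inv_mem a.2)) hca
    have h5 : (c : G) = (a : G) := by rwa [mul_inv_eq_one] at h4
    exact Subtype.ext h5.symm
  have hsurj : Function.Surjective f := Finite.surjective_of_injective hinj
  -- conjugation by τ inverts A
  have hinvert : ∀ x ∈ A, τ * x * τ⁻¹ = x⁻¹ := by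
    intro x hx
    obtain ⟨a, ha⟩ := hsurj ⟨x, hx⟩
    have hx' : x = (a : G)⁻¹ * (τ * a * τ⁻¹) := (congrArg Subtype.val ha).symm
    have h3 : τ * (τ * (a : G) * τ⁻¹) * τ⁻¹ = (a : G) := by
      calc τ * (τ * (a : G) * τ⁻¹) * τ⁻¹ = (τ * τ) * (a : G) * (τ * τ)⁻¹ := by group
      _ = (a : G) := by rw [ht2]; group
    rw [hx']
    calc τ * ((a : G)⁻¹ * (τ * (a : G) * τ⁻¹)) * τ⁻¹
        = (τ * (a : G)⁻¹ * τ⁻¹) * (τ * (τ * (a : G) * τ⁻¹) * τ⁻¹) := by group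
    _ = (τ * (a : G)⁻¹ * τ⁻¹) * (a : G) := by rw [h3]
    _ = ((a : G)⁻¹ * (τ * (a : G) * τ⁻¹))⁻¹ := by group
  -- conclude abelian
  intro a ha b hb
  have hab := hinvert _ (A.mul_mem ha hb)
  have ha' := hinvert a ha
  have hb' := hinvert b hb
  have h6 : (a * b)⁻¹ = a⁻¹ * b⁻¹ := by
    rw [← hab, ← ha', ← hb']; group
  have h7 : b⁻¹ * a⁻¹ = a⁻¹ * b⁻¹ := by rw [← mul_inv_rev, h6]
  have h8 := congrArg (·⁻¹) h7
  simpa [mul_inv_rev] using h8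
end

section
/- Let V be a finite abelian p-group and G a finite p'-group of automorphisms of V (p does not divide |G|). If V₁ is a G-invariant direct factor of V, then there exists a G-invariant subgroup V₂ of V with V = V₁ × V₂ (internal direct product). -/
theorem stmt_11 {p : ℕ} (hp : p.Prime) {V : Type*} [CommGroup V] [Finite V]
    (hV : IsPGroup p V) {G : Type*} [Group G] [Finite G] (hG : ¬ p ∣ Nat.card G)
    (φ : G →* MulAut V) (V₁ W : Subgroup V)
    (hinv : ∀ g : G, ∀ v ∈ V₁, φ g v ∈ V₁)
    (hcompl : Subgroup.IsComplement' V₁ W) :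
    ∃ V₂ : Subgroup V, (∀ g : G, ∀ v ∈ V₂, φ g v ∈ V₂) ∧ Subgroup.IsComplement' V₁ V₂ := by
  classical
  have := Fintype.ofFinite G
  haveI : Fact p.Prime := ⟨hp⟩
  set n : ℕ := Nat.card G with hn
  -- the projection onto V₁ along W
  set π : V → V := fun v => ((hcompl.equiv v).1 : V) with hπ
  set σ : V → V := fun v => ((hcompl.equiv v).2 : V) with hσ
  have hπσ : ∀ v : V, π v * σ v = v := fun v => hcompl.equiv_fst_mul_equiv_snd v
  have hπmem : ∀ v : V, π v ∈ V₁ := fun v => (hcompl.equiv v).1.2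
  have hσmem : ∀ v : V, σ v ∈ W := fun v => (hcompl.equiv v).2.2
  have hπid : ∀ v ∈ V₁, π v = v := by
    intro v hv
    have : (hcompl.equiv v).1 = ⟨v, hv⟩ :=
      hcompl.equiv_fst_eq_self_of_mem_of_one_mem W.one_mem hv
    exact congrArg Subtype.val this
  have hπmul : ∀ a b : V, π (a * b) = π a * π b := by
    intro a b
    set P : ↥(V₁ : Set V) × ↥(W : Set V) :=
      (⟨π a * π b, V₁.mul_mem (hπmem a) (hπmem b)⟩,
       ⟨σ a * σ b, W.mul_mem (hσmem a) (hσmem b)⟩) with hP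
    have h1 : (P.1 : V) * (P.2 : V) = a * b := by
      show (π a * π b) * (σ a * σ b) = a * b
      rw [mul_mul_mul_comm, hπσ, hπσ]
    have h2 : ((hcompl.equiv (a * b)).1 : V) * ((hcompl.equiv (a * b)).2 : V) = a * b :=
      hπσ (a * b)
    have h3 : P = hcompl.equiv (a * b) := (hcompl.existsUnique (a * b)).unique h1 h2
    have h4 := congrArg (fun x => ((x.1 : V)) ) h3
    exact h4.symm
  -- the averaged map f : V →* V₁
  have hfmem : ∀ v : V, (∏ g : G, φ g (π ((φ g)⁻¹ v))) ∈ V₁ :=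
    fun v => V₁.prod_mem fun g _ => hinv g _ (hπmem _)
  set f : V →* V₁ := MonoidHom.mk' (fun v => ⟨∏ g : G, φ g (π ((φ g)⁻¹ v)), hfmem v⟩)
    (by
      intro a b
      apply Subtype.ext
      show (∏ g : G, φ g (π ((φ g)⁻¹ (a * b)))) = _
      rw [Subgroup.coe_mul]
      rw [← Finset.prod_mul_distrib]
      refine Finset.prod_congr rfl fun g _ => ?_
      rw [map_mul, hπmul, map_mul]) with hf
  -- V₁ is a p-group, so x ↦ x^n is bijective on V₁
  obtain ⟨k, hk⟩ := IsPGroup.exists_card_eq (hV.to_subgroup V₁)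
  have hcop : Nat.Coprime n (Nat.card V₁) := by
    rw [hk]
    exact (Nat.Coprime.pow_right k ((hp.coprime_iff_not_dvd.mpr hG).symm))
  have hinj : Function.Injective (powMonoidHom n : V₁ →* V₁) := by
    intro x y hxy
    have h1 : (x * y⁻¹) ^ n = 1 := by
      rw [mul_pow, inv_pow]
      simp only [powMonoidHom_apply] at hxy
      rw [hxy, mul_inv_cancel]
    have h2 : orderOf (x * y⁻¹) ∣ n := orderOf_dvd_of_pow_eq_one h1
    have h3 : orderOf (x * y⁻¹) ∣ Nat.card V₁ := orderOf_dvd_natCard _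
    have h4 : orderOf (x * y⁻¹) ∣ 1 := hcop ▸ Nat.dvd_gcd h2 h3
    have h5 : x * y⁻¹ = 1 := orderOf_eq_one_iff.mp (Nat.dvd_one.mp h4)
    exact mul_inv_eq_one.mp h5
  set ψ : V₁ ≃* V₁ :=
    MulEquiv.ofBijective (powMonoidHom n : V₁ →* V₁)
      (Finite.injective_iff_bijective.mp hinj) with hψ
  have hψval : ∀ x : V₁, (ψ x : V) = (x : V) ^ n := fun x => rfl
  -- f restricted to V₁ is x ↦ x ^ n
  have hfV₁ : ∀ v : V, ∀ hv : v ∈ V₁, f v = ψ ⟨v, hv⟩ := by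
    intro v hv
    apply Subtype.ext
    show (∏ g : G, φ g (π ((φ g)⁻¹ v))) = (v : V) ^ n
    have : ∀ g : G, φ g (π ((φ g)⁻¹ v)) = v := by
      intro g
      have hmem : (φ g)⁻¹ v ∈ V₁ := by
        have := hinv g⁻¹ v hv
        simpa [map_inv] using this
      rw [hπid _ hmem]
      simp
    rw [Finset.prod_congr rfl fun g _ => this g, Finset.prod_const, hn,
      Nat.card_eq_fintype_card, Finset.card_univ]
  -- equivariance of f
  have hfequiv : ∀ (h : G) (v : V), (f (φ h v) : V) = φ h (f v : V) := by
    intro h v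
    show (∏ g : G, φ g (π ((φ g)⁻¹ (φ h v)))) = φ h (∏ g : G, φ g (π ((φ g)⁻¹ v)))
    rw [map_prod]
    have e1 : ∀ (a b : G) (w : V), φ a (φ b w) = φ (a * b) w := by
      intro a b w; rw [map_mul]; rfl
    have e2 : ∀ (a : G) (w : V), (φ a)⁻¹ w = φ a⁻¹ w := by
      intro a w; rw [map_inv]
    refine Fintype.prod_equiv (Equiv.mulLeft h⁻¹) _ _ fun x => ?_
    show φ x (π ((φ x)⁻¹ (φ h v))) = φ h (φ (h⁻¹ * x) (π ((φ (h⁻¹ * x))⁻¹ v)))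
    have g1 : h * (h⁻¹ * x) = x := by group
    have g2 : (h⁻¹ * x)⁻¹ = x⁻¹ * h := by group
    rw [e2, e1, e2, e1, g1, g2]
  -- the equivariant projection e
  set e : V →* V₁ := (ψ.symm.toMonoidHom).comp f with he
  have heV₁ : ∀ v : V, ∀ hv : v ∈ V₁, e v = ⟨v, hv⟩ := by
    intro v hv
    show ψ.symm (f v) = ⟨v, hv⟩
    rw [hfV₁ v hv]
    exact ψ.symm_apply_apply _
  have heequiv : ∀ (h : G) (v : V), (e (φ h v) : V) = φ h (e v : V) := by
    intro h v
    have key : ψ (e (φ h v)) = ψ ⟨φ h (e v : V), hinv h _ (e v).2⟩ := by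
      have l1 : ψ (e (φ h v)) = f (φ h v) := ψ.apply_symm_apply _
      have l2 : (ψ (⟨φ h (e v : V), hinv h _ (e v).2⟩ : V₁) : V) = (φ h (e v : V)) ^ n := rfl
      apply Subtype.ext
      rw [l1, l2, hfequiv, ← map_pow]
      congr 1
      have : (f v : V) = (ψ (e v) : V) := by rw [he]; exact congrArg _ (ψ.apply_symm_apply _).symm
      rw [this, hψval]
    have := ψ.injective key
    rw [this]
  refine ⟨e.ker, ?_, ?_⟩
  · intro g v hv
    rw [MonoidHom.mem_ker] at hv ⊢
    apply Subtype.ext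
    rw [heequiv]
    simp [hv]
  · rw [Subgroup.isComplement'_def, Subgroup.isComplement_iff_existsUnique]
    intro v
    have hbker : (e v : V)⁻¹ * v ∈ e.ker := by
      rw [MonoidHom.mem_ker, map_mul, map_inv]
      rw [heV₁ (e v : V) (e v).2]
      simp
    refine ⟨⟨⟨(e v : V), (e v).2⟩, ⟨(e v : V)⁻¹ * v, hbker⟩⟩, ?_, ?_⟩
    · show (e v : V) * ((e v : V)⁻¹ * v) = v
      group
    · rintro ⟨⟨a, ha⟩, ⟨b, hb⟩⟩ hab
      have ha' : a ∈ V₁ := ha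
      have hb' : b ∈ e.ker := hb
      have hab' : a * b = v := hab
      have hev : e v = ⟨a, ha'⟩ := by
        rw [← hab', map_mul, heV₁ a ha', MonoidHom.mem_ker.mp hb', mul_one]
      have hevv : (e v : V) = a := by rw [hev]
      have hbv : b = (e v : V)⁻¹ * v := by
        rw [hevv, ← hab']
        group
      simp only [Prod.mk.injEq, Subtype.mk.injEq]
      exact ⟨hevv.symm, hbv⟩
end
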